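/- Assume c ≠ 0 and let λ ∈ ℂ with λ ≠ −b₂. Define u₁ = λ + b₁, u₂ = 1, u₃ = e^{λτ}·((λ−a)(λ+b₁) + 1)/c, and u₄ = u₃/(λ+b₂). If P(λ) = 0, then (u₁,u₂,u₃,u₄) is a nonzero solution of the linearized eigenvalue equations of the delay-coupled FitzHugh–Nagumo system: λu₁ = a u₁ − u₂ + c e^{−λτ} u₃, λu₂ = u₁ − b₁u₂, λu₃ = a u₃ − u₄ + c e^{−λτ} u₁, and λu₄ = u₃ − b₂u₄. -/

import Mathlib

noncomputable section

/-- Coefficient A = b₁+b₂−2a -/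
def cA (a b₁ b₂ : ℝ) : ℝ := b₁ + b₂ - 2*a
/-- Coefficient B = b₁b₂−2a(b₁+b₂)+a²+2 -/
def cB (a b₁ b₂ : ℝ) : ℝ := b₁*b₂ - 2*a*(b₁+b₂) + a^2 + 2
/-- Coefficient C = (a²+1)(b₁+b₂)−2ab₁b₂−2a -/
def cC (a b₁ b₂ : ℝ) : ℝ := (a^2+1)*(b₁+b₂) - 2*a*b₁*b₂ - 2*a
/-- Coefficient D = a²b₁b₂−a(b₁+b₂)+1 -/
def cD (a b₁ b₂ : ℝ) : ℝ := a^2*b₁*b₂ - a*(b₁+b₂) + 1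
/-- Coefficient E = c² -/
def cE (c : ℝ) : ℝ := c^2
/-- P̂ = A²−2B -/
def qP (a b₁ b₂ c : ℝ) : ℝ := (cA a b₁ b₂)^2 - 2*(cB a b₁ b₂)
/-- Q̂ = B²+2D−2AC−E² -/
def qQ (a b₁ b₂ c : ℝ) : ℝ :=
  (cB a b₁ b₂)^2 + 2*(cD a b₁ b₂) - 2*(cA a b₁ b₂)*(cC a b₁ b₂) - (cE c)^2
/-- R̂ = C²−2BD−E²(b₁²+b₂²) -/
def qR (a b₁ b₂ c : ℝ) : ℝ :=
  (cC a b₁ b₂)^2 - 2*(cB a b₁ b₂)*(cD a b₁ b₂) - (cE c)^2*(b₁^2+b₂^2)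
/-- Ŝ = D²−E²(b₁b₂)² -/
def qS (a b₁ b₂ c : ℝ) : ℝ := (cD a b₁ b₂)^2 - (cE c)^2*(b₁*b₂)^2
/-- Auxiliary quartic h(z) = z⁴+P̂z³+Q̂z²+R̂z+Ŝ -/
def hq (a b₁ b₂ c z : ℝ) : ℝ :=
  z^4 + qP a b₁ b₂ c * z^3 + qQ a b₁ b₂ c * z^2 + qR a b₁ b₂ c * z + qS a b₁ b₂ c
/-- Derivative h′(z) = 4z³+3P̂z²+2Q̂z+R̂ -/
def hq' (a b₁ b₂ c z : ℝ) : ℝ :=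
  4*z^3 + 3*qP a b₁ b₂ c * z^2 + 2*qQ a b₁ b₂ c * z + qR a b₁ b₂ c
/-- Characteristic function P(λ) = λ⁴+Aλ³+Bλ²+Cλ+D − E(λ+b₁)(λ+b₂)e^{−2λτ} -/
def charP (a b₁ b₂ c τ : ℝ) (z : ℂ) : ℂ :=
  z^4 + (cA a b₁ b₂ : ℂ)*z^3 + (cB a b₁ b₂ : ℂ)*z^2 + (cC a b₁ b₂ : ℂ)*z + (cD a b₁ b₂ : ℂ)
    - (cE c : ℂ) * (z + (b₁:ℂ)) * (z + (b₂:ℂ)) * Complex.exp (-(2*z*(τ:ℂ)))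

theorem stmt_16 (a b₁ b₂ c τ : ℝ) (ha : 0 < a) (hb₁ : 0 < b₁) (hb₂ : 0 < b₂)
    (hc : c ≠ 0) (hτ : 0 ≤ τ) (z : ℂ) (hz : z ≠ -(b₂:ℂ))
    (u₁ u₂ u₃ u₄ : ℂ)
    (hu₁ : u₁ = z + (b₁:ℂ)) (hu₂ : u₂ = 1)
    (hu₃ : u₃ = Complex.exp (z * (τ:ℂ)) * ((z - (a:ℂ)) * (z + (b₁:ℂ)) + 1) / (c:ℂ))
    (hu₄ : u₄ = u₃ / (z + (b₂:ℂ)))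
    (hroot : charP a b₁ b₂ c τ z = 0) :
    (z * u₁ = (a:ℂ) * u₁ - u₂ + (c:ℂ) * Complex.exp (-(z * (τ:ℂ))) * u₃ ∧
      z * u₂ = u₁ - (b₁:ℂ) * u₂ ∧
      z * u₃ = (a:ℂ) * u₃ - u₄ + (c:ℂ) * Complex.exp (-(z * (τ:ℂ))) * u₁ ∧
      z * u₄ = u₃ - (b₂:ℂ) * u₄) ∧
    (u₁, u₂, u₃, u₄) ≠ (0, 0, 0, 0) := by
  have hc' : (c:ℂ) ≠ 0 := Complex.ofReal_ne_zero.mpr hc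
  have hzb : z + (b₂:ℂ) ≠ 0 := by
    intro h; exact hz (by linear_combination h)
  have hE1 : Complex.exp (z * (τ:ℂ)) ≠ 0 := Complex.exp_ne_zero _
  have hE12 : Complex.exp (-(z * (τ:ℂ))) * Complex.exp (z * (τ:ℂ)) = 1 := by
    rw [← Complex.exp_add]
    have : -(z * (τ:ℂ)) + z * τ = 0 := by ring
    rw [this, Complex.exp_zero]
  have hE3 : Complex.exp (-(2*z*(τ:ℂ))) =
      Complex.exp (-(z * (τ:ℂ))) * Complex.exp (-(z * (τ:ℂ))) := by
    rw [← Complex.exp_add]; congr 1; ring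
  have key : (c:ℂ)^2 * Complex.exp (-(z * (τ:ℂ))) * Complex.exp (-(z * (τ:ℂ)))
      * (z + (b₁:ℂ)) * (z + (b₂:ℂ))
      = ((z - (a:ℂ)) * (z + (b₁:ℂ)) + 1) * ((z - (a:ℂ)) * (z + (b₂:ℂ)) + 1) := by
    have h := hroot
    unfold charP cA cB cC cD cE at h
    rw [hE3] at h
    push_cast at h ⊢
    linear_combination -h
  have key' : (c:ℂ)^2 * (z + (b₁:ℂ)) * (z + (b₂:ℂ))
      = ((z - (a:ℂ)) * (z + (b₁:ℂ)) + 1) * ((z - (a:ℂ)) * (z + (b₂:ℂ)) + 1)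
        * Complex.exp (z * (τ:ℂ)) * Complex.exp (z * (τ:ℂ)) := by
    linear_combination Complex.exp (z * (τ:ℂ)) * Complex.exp (z * (τ:ℂ)) * key -
      ((c:ℂ)^2 * (z + (b₁:ℂ)) * (z + (b₂:ℂ)) *
        (Complex.exp (-(z * (τ:ℂ))) * Complex.exp (z * (τ:ℂ)) + 1)) * hE12
  subst hu₁ hu₂ hu₃ hu₄
  rw [Complex.exp_neg]
  refine ⟨⟨?_, by ring, ?_, ?_⟩, ?_⟩
  · field_simp
    ring
  · field_simp
    linear_combination (-1:ℂ) * key'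
  · field_simp
    ring
  · intro h
    have := congrArg (fun p => p.2.1) h
    simp at this
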